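/- A weak ordering ≾ on a set X is quasilinear (there are no pairwise distinct a,b,c with a ≺ b ∼ c) if and only if ≾ is single-plateaued for every total ordering ≤ on X that extends ≾. -/

import Mathlib

/-- Strict part of a weak ordering `R`. -/
def SLT {X : Type*} (R : X → X → Prop) (x y : X) : Prop := R x y ∧ ¬ R y x

/-- Symmetric part of a weak ordering `R`. -/
def SIM {X : Type*} (R : X → X → Prop) (x y : X) : Prop := R x y ∧ R y x

/-- A weak ordering is quasilinear if there are no pairwise distinct `a,b,c`
with `a ≺ b ∼ c`. -/
def Quasilinear {X : Type*} (R : X → X → Prop) : Prop :=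
  ¬ ∃ a b c : X, (a ≠ b ∧ a ≠ c ∧ b ≠ c) ∧ SLT R a b ∧ SIM R b c

/-- `R` is single-plateaued for the total ordering `le`. -/
def SinglePlateaued {X : Type*} (R : X → X → Prop) (le : X → X → Prop) : Prop :=
  ∀ a b c : X, (le a b ∧ a ≠ b) → (le b c ∧ b ≠ c) →
    SLT R b a ∨ SLT R b c ∨ (SIM R a b ∧ SIM R b c)

theorem stmt_19 {X : Type*} (R : X → X → Prop)
    (htot : ∀ x y : X, R x y ∨ R y x) (htrans : Transitive R) :
    Quasilinear R ↔
      ∀ le : X → X → Prop, IsLinearOrder X le →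
        (∀ a b : X, SLT R a b → le a b ∧ a ≠ b) → SinglePlateaued R le := by
  constructor
  · -- quasilinear → single-plateaued for all extensions
    intro hq le hlin hext a b c ⟨hab, hneab⟩ ⟨hbc, hnebc⟩
    have hac : a ≠ c := by
      rintro rfl
      exact hneab (hlin.antisymm _ _ hab hbc)
    by_contra hcon
    have h1 : ¬ SLT R b a := fun h => hcon (Or.inl h)
    have h2 : ¬ SLT R b c := fun h => hcon (Or.inr (Or.inl h))
    have h3 : ¬ (SIM R a b ∧ SIM R b c) := fun h => hcon (Or.inr (Or.inr h))
    -- from ¬ SLT R b a and totality, R a b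
    have hRab : R a b := by
      rcases htot a b with h | h
      · exact h
      · by_contra h'
        exact h1 ⟨h, h'⟩
    have hRcb : R c b := by
      rcases htot c b with h | h
      · exact h
      · by_contra h'
        exact h2 ⟨h, h'⟩
    by_cases hRba : R b a
    · by_cases hRbc : R b c
      · exact h3 ⟨⟨hRab, hRba⟩, ⟨hRbc, hRcb⟩⟩
      · have := hext c b ⟨hRcb, hRbc⟩
        exact hnebc ((hlin.antisymm _ _ hbc this.1).symm ▸ rfl)
    · by_cases hRbc : R b c
      · exact hq ⟨a, b, c, ⟨hneab, hac, hnebc⟩, And.intro hRab hRba, And.intro hRbc hRcb⟩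
      · have := hext c b ⟨hRcb, hRbc⟩
        exact hnebc ((hlin.antisymm _ _ hbc this.1).symm ▸ rfl)
  · -- converse
    intro h
    rintro ⟨a, b, c, ⟨hab, hac, hbc⟩, ⟨hRab, hRba⟩, ⟨hRbc, hRcb⟩⟩
    classical
    set σ : X ≃ X := if WellOrderingRel b c then Equiv.refl X else Equiv.swap b c with hσ
    set s : X → X → Prop := fun x y => WellOrderingRel (σ x) (σ y) with hs
    have hsbc : s b c := by
      by_cases hw : WellOrderingRel b c
      · simp [hs, hσ, hw]
      · have : WellOrderingRel c b := by
          rcases (trichotomous (r := WellOrderingRel) b c) with h' | h' | h'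
          · exact absurd h' hw
          · exact absurd h' hbc
          · exact h'
        simp [hs, hσ, hw, Equiv.swap_apply_left, Equiv.swap_apply_right, this]
    have hstrans : ∀ {x y z}, s x y → s y z → s x z := fun h1 h2 =>
      @IsTrans.trans X WellOrderingRel _ _ _ _ h1 h2
    have hsirr : ∀ x, ¬ s x x := fun x h =>
      irrefl (r := WellOrderingRel) (σ x) h
    have hstri : ∀ x y : X, x = y ∨ s x y ∨ s y x := by
      intro x y
      rcases (trichotomous (r := WellOrderingRel) (σ x) (σ y)) with h' | h' | h'
      · exact Or.inr (Or.inl h')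
      · exact Or.inl (σ.injective h')
      · exact Or.inr (Or.inr h')
    set le : X → X → Prop :=
      fun x y => (R x y ∧ ¬ R y x) ∨ ((R x y ∧ R y x) ∧ (x = y ∨ s x y)) with hle
    have hrefl : ∀ x, le x x := fun x =>
      Or.inr ⟨⟨(htot x x).elim id id, (htot x x).elim id id⟩, Or.inl rfl⟩
    have htr : ∀ x y z : X, le x y → le y z → le x z := by
      rintro x y z (⟨h1, h2⟩ | ⟨⟨h1, h1'⟩, hx⟩) (⟨h3, h4⟩ | ⟨⟨h3, h3'⟩, hy⟩)
      · exact Or.inl ⟨htrans h1 h3, fun h => h2 (htrans h3 h)⟩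
      · exact Or.inl ⟨htrans h1 h3, fun h => h2 (htrans h3 h)⟩
      · exact Or.inl ⟨htrans h1 h3, fun h => h4 (htrans h h1)⟩
      · refine Or.inr ⟨⟨htrans h1 h3, htrans h3' h1'⟩, ?_⟩
        rcases hx with rfl | hx
        · exact hy
        · rcases hy with rfl | hy
          · exact Or.inr hx
          · exact Or.inr (hstrans hx hy)
    have hanti : ∀ x y : X, le x y → le y x → x = y := by
      rintro x y (⟨h1, h2⟩ | ⟨⟨h1, h1'⟩, hx⟩) (⟨h3, h4⟩ | ⟨⟨h3, h3'⟩, hy⟩)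
      · exact absurd h3 h2
      · exact absurd h3 h2
      · exact absurd h1 h4
      · rcases hx with rfl | hx
        · rfl
        · rcases hy with rfl | hy
          · rfl
          · exact absurd (hstrans hx hy) (hsirr x)
    have htotal : ∀ x y : X, le x y ∨ le y x := by
      intro x y
      by_cases h1 : R x y <;> by_cases h2 : R y x
      · rcases hstri x y with rfl | hs' | hs'
        · exact Or.inl (hrefl x)
        · exact Or.inl (Or.inr ⟨⟨h1, h2⟩, Or.inr hs'⟩)
        · exact Or.inr (Or.inr ⟨⟨h2, h1⟩, Or.inr hs'⟩)
      · exact Or.inl (Or.inl ⟨h1, h2⟩)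
      · exact Or.inr (Or.inl ⟨h2, h1⟩)
      · exact absurd (htot x y) (by tauto)
    have hlin : IsLinearOrder X le := by
      haveI : IsRefl X le := ⟨hrefl⟩
      haveI : IsTrans X le := ⟨htr⟩
      haveI : IsPreorder X le := ⟨⟩
      haveI : IsAntisymm X le := ⟨hanti⟩
      haveI : IsPartialOrder X le := ⟨⟩
      haveI : IsTotal X le := ⟨htotal⟩
      exact ⟨⟩
    have hext : ∀ x y : X, SLT R x y → le x y ∧ x ≠ y := by
      rintro x y ⟨h1, h2⟩
      exact ⟨Or.inl ⟨h1, h2⟩, fun h => h2 (h ▸ h1)⟩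
    have := h le hlin hext a b c ⟨Or.inl ⟨hRab, hRba⟩, hab⟩
      ⟨Or.inr ⟨⟨hRbc, hRcb⟩, Or.inr hsbc⟩, hbc⟩
    rcases this with ⟨h1, h2⟩ | ⟨h1, h2⟩ | ⟨⟨h1, h2⟩, _⟩
    · exact hRba h1
    · exact h2 hRcb
    · exact hRba h2
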